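/- Let f : 2^S → ℝ be z-indexable and let 1 ≤ k ≤ n−1. Define q_A = (∏_{i∈A} z_i)/T_k(S) for A ∈ S^(k), and let V = Σ_{A∈S^(k)} q_A P_f(A, σ₀), where σ₀ is any fixed search (V is independent of the choice of σ₀). Then the mixed Searcher strategy s that selects A ∈ S^(k) with probability q_A and then plays s_A guarantees an expected payoff of at least V: for every Hider pure strategy H ∈ S^(k), Σ_{A∈S^(k)} q_A P_f(H, s_A) ≥ V. -/

import Mathlib

/-- `f` is `z`-indexable. -/
def ZIndexable {n : ℕ} (f : Finset (Fin n) → ℝ) (z : Fin n → ℝ) : Prop :=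
  (∀ r : Fin n, 0 < z r) ∧
  (∀ A : Finset (Fin n), 0 < f A) ∧
  (∀ A B : Finset (Fin n), B ⊂ A → f A < f B) ∧
  (∀ (A : Finset (Fin n)) (i j : Fin n), i ≠ j → i ∉ A → j ∉ A →
    (f (insert i (insert j A)) - f (insert j A)) /
      (f (insert j (insert i A)) - f (insert i A)) = z i / z j)

/-- The set of locations searched by the time all targets in `H` are found. -/
def stopSet {n : ℕ} (σ : Equiv.Perm (Fin n)) (H : Finset (Fin n)) : Finset (Fin n) :=
  (Finset.univ.filter
    (fun t : Fin n => (t : ℕ) ≤ H.sup (fun h => ((σ.symm h : Fin n) : ℕ)))).image σ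

/-- The payoff `P_f(H,σ) = f(S^σ_i)`, `i` minimal with `H ⊆ S^σ_i`. -/
def payoff {n : ℕ} (f : Finset (Fin n) → ℝ) (σ : Equiv.Perm (Fin n))
    (H : Finset (Fin n)) : ℝ :=
  f (stopSet σ H)

/-- The searches whose first `k` locations are exactly the set `A`. -/
def startsWith {n : ℕ} (k : ℕ) (A : Finset (Fin n)) : Finset (Equiv.Perm (Fin n)) :=
  Finset.univ.filter
    (fun σ => (Finset.univ.filter (fun t : Fin n => (t : ℕ) < k)).image σ = A)

/-- `P_f(H, s_A)`: the expected payoff of the mixed strategy `s_A` (search `A` first, then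
the rest in uniformly random order) against the Hider strategy `H`. -/
noncomputable def sPay {n : ℕ} (f : Finset (Fin n) → ℝ) (k : ℕ) (A H : Finset (Fin n)) : ℝ :=
  (∑ σ ∈ startsWith k A, payoff f σ H) / (startsWith k A).card

/-- `T_k(A) = Σ_{B ⊆ A, |B| = k} ∏_{i∈B} z_i`. -/
def T {n : ℕ} (z : Fin n → ℝ) (k : ℕ) (A : Finset (Fin n)) : ℝ :=
  ∑ B ∈ Finset.powersetCard k A, ∏ i ∈ B, z i

section Helpers
open Finset
variable {n : ℕ} (z : Fin n → ℝ)

lemma T_eq_zero {m : ℕ} {A : Finset (Fin n)} (h : A.card < m) : T z m A = 0 := by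
  unfold T
  rw [Finset.powersetCard_eq_empty.2 h, Finset.sum_empty]

lemma T_self (A : Finset (Fin n)) : T z A.card A = ∏ i ∈ A, z i := by
  unfold T
  rw [Finset.powersetCard_self, Finset.sum_singleton]

lemma T_insert {j : Fin n} {C : Finset (Fin n)} (hj : j ∉ C) (m : ℕ) :
    T z (m+1) (insert j C) = T z (m+1) C + z j * T z m C := by
  unfold T
  rw [Finset.powersetCard_succ_insert hj, Finset.sum_union, Finset.sum_image, Finset.mul_sum]
  · congr 1
    refine Finset.sum_congr rfl fun B hB => ?_
    rw [Finset.mem_powersetCard] at hB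
    rw [Finset.prod_insert (fun hc => hj (hB.1 hc))]
  · intro B hB B' hB' hi
    rw [Finset.mem_coe, Finset.mem_powersetCard] at hB hB'
    have hjB : j ∉ B := fun hc => hj (hB.1 hc)
    have hjB' : j ∉ B' := fun hc => hj (hB'.1 hc)
    have := congrArg (Finset.erase · j) hi
    simpa [Finset.erase_insert hjB, Finset.erase_insert hjB'] using this
  · rw [Finset.disjoint_left]
    intro B hB hB'
    rw [Finset.mem_powersetCard] at hB
    rw [Finset.mem_image] at hB'
    obtain ⟨B', hB', rfl⟩ := hB'
    rw [Finset.mem_powersetCard] at hB'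
    exact hj (hB.1 (Finset.mem_insert_self j B'))

lemma mem_stopSet_iff {σ : Equiv.Perm (Fin n)} {H : Finset (Fin n)} {x : Fin n} :
    x ∈ stopSet σ H ↔ ((σ.symm x : Fin n) : ℕ) ≤ H.sup (fun h => ((σ.symm h : Fin n) : ℕ)) := by
  unfold stopSet
  constructor
  · rintro hx
    rw [Finset.mem_image] at hx
    obtain ⟨t, ht, rfl⟩ := hx
    rw [Finset.mem_filter] at ht
    simpa using ht.2
  · intro hx
    rw [Finset.mem_image]
    exact ⟨σ.symm x, Finset.mem_filter.2 ⟨Finset.mem_univ _, hx⟩, by simp⟩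

lemma subset_stopSet {σ : Equiv.Perm (Fin n)} {H : Finset (Fin n)} : H ⊆ stopSet σ H := by
  intro h hh
  rw [mem_stopSet_iff]
  exact Finset.le_sup (f := fun h => ((σ.symm h : Fin n) : ℕ)) hh

lemma mem_startsWith {k : ℕ} {A : Finset (Fin n)} {σ : Equiv.Perm (Fin n)} :
    σ ∈ startsWith k A ↔ (Finset.univ.filter (fun t : Fin n => (t : ℕ) < k)).image σ = A := by
  unfold startsWith; simp

lemma startsWith_mem_iff {k : ℕ} {A : Finset (Fin n)} {σ : Equiv.Perm (Fin n)}
    (hσ : σ ∈ startsWith k A) {x : Fin n} : x ∈ A ↔ ((σ.symm x : Fin n) : ℕ) < k := by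
  rw [mem_startsWith] at hσ
  subst hσ
  rw [Finset.mem_image]
  constructor
  · rintro ⟨t, ht, rfl⟩
    rw [Finset.mem_filter] at ht
    simpa using ht.2
  · intro h
    exact ⟨σ.symm x, Finset.mem_filter.2 ⟨Finset.mem_univ _, h⟩, by simp⟩

end Helpers

lemma T_zero {n : ℕ} (z : Fin n → ℝ) (A : Finset (Fin n)) : T z 0 A = 1 := by
  unfold T
  rw [Finset.powersetCard_zero, Finset.sum_singleton, Finset.prod_empty]
section Struct
open Finset
variable {n : ℕ}

/-- canonical set of size `s` -/
def Kset (n s : ℕ) : Finset (Fin n) :=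
  Finset.univ.filter (fun x : Fin n => (x : ℕ) < s)

lemma card_Kset {s : ℕ} (h : s ≤ n) : (Kset n s).card = s := by
  rw [show Kset n s = Finset.attachFin (Finset.range s)
      (fun m hm => lt_of_lt_of_le (Finset.mem_range.1 hm) h) from ?_,
    Finset.card_attachFin, Finset.card_range]
  ext x; simp [Kset]

variable (f : Finset (Fin n) → ℝ) (z : Fin n → ℝ)

noncomputable def lam : ℕ → ℝ
  | u =>
    (f (Kset n (n - u)) -
        ∑ m ∈ (Finset.range u).attach, lam m.1 * T z m.1 (Kset n (n - u))ᶜ) /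
      ∏ i ∈ (Kset n (n - u))ᶜ, z i
  decreasing_by exact Finset.mem_range.1 m.2

lemma lam_def (u : ℕ) :
    lam f z u = (f (Kset n (n - u)) -
        ∑ m ∈ Finset.range u, lam f z m * T z m (Kset n (n - u))ᶜ) /
      ∏ i ∈ (Kset n (n - u))ᶜ, z i := by
  rw [lam, ← Finset.sum_attach (Finset.range u) (fun m => lam f z m * T z m (Kset n (n - u))ᶜ)]

variable (hz : ∀ r, 0 < z r)
include hz

lemma prod_z_ne_zero (A : Finset (Fin n)) : (∏ i ∈ A, z i) ≠ 0 :=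
  ne_of_gt (Finset.prod_pos fun i _ => hz i)

lemma chain_eq {s : ℕ} (h1 : 1 ≤ s) (h2 : s ≤ n) :
    f (Kset n s) = ∑ m ∈ Finset.range n, lam f z m * T z m (Kset n s)ᶜ := by
  have hcard : (Kset n s)ᶜ.card = n - s := by
    rw [Finset.card_compl, card_Kset h2, Fintype.card_fin]
  have hu : n - (n - s) = s := by omega
  have hlt : n - s < n := by omega
  -- split the range n sum at u := n - s
  have hsplit : ∑ m ∈ Finset.range n, lam f z m * T z m (Kset n s)ᶜ =
      (∑ m ∈ Finset.range (n - s), lam f z m * T z m (Kset n s)ᶜ) +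
        lam f z (n - s) * T z (n - s) (Kset n s)ᶜ := by
    rw [← Finset.sum_range_succ]
    refine (Finset.sum_subset (Finset.range_subset_range.2 (by omega)) ?_).symm
    intro m _ hm
    rw [Finset.mem_range, not_lt] at hm
    rw [T_eq_zero z (by omega), mul_zero]
  rw [hsplit]
  have hTself : T z (n - s) (Kset n s)ᶜ = ∏ i ∈ (Kset n s)ᶜ, z i := by
    rw [← hcard, T_self]
  rw [hTself, lam_def, hu, div_mul_cancel₀ _ (prod_z_ne_zero z hz _)]
  ring

end Struct
section StructMain
open Finset
variable {n : ℕ} (f : Finset (Fin n) → ℝ) (z : Fin n → ℝ)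

lemma key_T_identity {i j : Fin n} (hij : i ≠ j) {A : Finset (Fin n)}
    (hiA : i ∈ A) (hjA : j ∉ A) (m : ℕ) :
    z i * T z m Aᶜ = (z i - z j) * T z m (insert j A)ᶜ + z j * T z m (insert j (A.erase i))ᶜ := by
  set C := Aᶜ.erase j with hC
  have hjAc : j ∈ Aᶜ := Finset.mem_compl.2 hjA
  have hiC : i ∉ C := fun hc => (Finset.mem_compl.1 (Finset.mem_of_mem_erase hc)) hiA
  have hjC : j ∉ C := Finset.notMem_erase _ _
  have e1 : (insert j A)ᶜ = C := by rw [Finset.compl_insert]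
  have e2 : Aᶜ = insert j C := by rw [hC, Finset.insert_erase hjAc]
  have e3 : (insert j (A.erase i))ᶜ = insert i C := by
    rw [Finset.compl_insert, Finset.compl_erase, Finset.erase_insert_of_ne hij, hC]
  rw [e1, e2, e3]
  cases m with
  | zero => rw [T_zero, T_zero, T_zero]; ring
  | succ m => rw [T_insert z hjC, T_insert z hiC]; ring

theorem struct_thm (hf : ZIndexable f z) :
    ∀ A : Finset (Fin n), A.Nonempty → f A = ∑ m ∈ Finset.range n, lam f z m * T z m Aᶜ := by
  obtain ⟨hz, hpos, hmono, hratio⟩ := hf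
  suffices h : ∀ N (A : Finset (Fin n)),
      (n - A.card) * (n + 1) + (A \ Kset n A.card).card ≤ N → A.Nonempty →
      f A = ∑ m ∈ Finset.range n, lam f z m * T z m Aᶜ by
    exact fun A hA => h _ A le_rfl hA
  intro N
  induction N using Nat.strong_induction_on with
  | _ N ih =>
  intro A hμ hA
  have hs1 : 1 ≤ A.card := Finset.card_pos.2 hA
  have hsn : A.card ≤ n := by
    simpa using Finset.card_le_univ A
  have hKcard : (Kset n A.card).card = A.card := card_Kset hsn
  by_cases hchain : A = Kset n A.card
  · rw [hchain]; exact chain_eq f z hz hs1 hsn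
  · -- exchange step
    have hAK : (A \ Kset n A.card).Nonempty := by
      rw [Finset.sdiff_nonempty]
      intro hc
      exact hchain (Finset.eq_of_subset_of_card_le hc hKcard.le)
    have hKA : (Kset n A.card \ A).Nonempty := by
      rw [Finset.sdiff_nonempty]
      intro hc
      exact hchain ((Finset.eq_of_subset_of_card_le hc hKcard.ge).symm)
    obtain ⟨i, hi⟩ := hAK
    obtain ⟨j, hj⟩ := hKA
    have hiA : i ∈ A := (Finset.mem_sdiff.1 hi).1
    have hiK : i ∉ Kset n A.card := (Finset.mem_sdiff.1 hi).2
    have hjK : j ∈ Kset n A.card := (Finset.mem_sdiff.1 hj).1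
    have hjA : j ∉ A := (Finset.mem_sdiff.1 hj).2
    have hij : i ≠ j := fun hc => hiK (hc ▸ hjK)
    have hslt : A.card < n := by
      rcases lt_or_eq_of_le hsn with h | h
      · exact h
      · exfalso
        apply hchain
        have h1 : A = Finset.univ := Finset.eq_univ_of_card _ (by rw [h, Fintype.card_fin])
        have h2 : Kset n A.card = Finset.univ := Finset.eq_univ_of_card _
          (by rw [hKcard, h, Fintype.card_fin])
        exact h1.trans h2.symm
    set Ab := A.erase i with hAb
    have hiAb : i ∉ Ab := Finset.notMem_erase _ _
    have hjAb : j ∉ Ab := fun hc => hjA (Finset.mem_of_mem_erase hc)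
    have hins : insert i Ab = A := Finset.insert_erase hiA
    have hcomm : insert i (insert j Ab) = insert j A := by
      rw [Finset.insert_comm, hins]
    have hratio' := hratio Ab i j hij hiAb hjAb
    rw [hcomm, hins] at hratio'
    have hlt : f (insert j A) < f A := hmono _ _ (Finset.ssubset_insert hjA)
    have hden : f (insert j A) - f A ≠ 0 := by
      intro hc
      have := sub_eq_zero.1 hc
      linarith
    have hzj : z j ≠ 0 := ne_of_gt (hz j)
    have hzi : z i ≠ 0 := ne_of_gt (hz i)
    have hcross : (f (insert j A) - f (insert j Ab)) * z j =
        z i * (f (insert j A) - f A) := by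
      have := (div_eq_div_iff hden hzj).1 hratio'
      linarith [this]
    -- measures decrease
    have hcardiA : (insert j A).card = A.card + 1 := Finset.card_insert_of_notMem hjA
    have hcardA' : (insert j Ab).card = A.card := by
      rw [Finset.card_insert_of_notMem hjAb, hAb, Finset.card_erase_of_mem hiA]
      omega
    have hsdA' : insert j Ab \ Kset n A.card = (A \ Kset n A.card).erase i := by
      ext x
      simp only [hAb, Finset.mem_sdiff, Finset.mem_erase, Finset.mem_insert]
      constructor
      · rintro ⟨hx1 | ⟨hx2a, hx2b⟩, hx3⟩
        · exact absurd (hx1 ▸ hjK) hx3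
        · exact ⟨hx2a, hx2b, hx3⟩
      · rintro ⟨hx1, hx2, hx3⟩
        exact ⟨Or.inr ⟨hx1, hx2⟩, hx3⟩
    have hμiA : (n - (insert j A).card) * (n + 1) +
        ((insert j A) \ Kset n (insert j A).card).card < N := by
      rw [hcardiA]
      have h1 : ((insert j A) \ Kset n (A.card + 1)).card ≤ A.card + 1 :=
        le_trans (Finset.card_le_card Finset.sdiff_subset) hcardiA.le
      have h2 : 1 ≤ (A \ Kset n A.card).card := Finset.card_pos.2 ⟨i, hi⟩
      have h3 : (n - A.card) * (n + 1) = (n - A.card - 1) * (n + 1) + (n + 1) := by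
        have ha : n - A.card = (n - A.card - 1) + 1 := by omega
        calc (n - A.card) * (n + 1) = ((n - A.card - 1) + 1) * (n + 1) := by rw [← ha]
          _ = (n - A.card - 1) * (n + 1) + (n + 1) := by ring
      have h4 : n - (A.card + 1) = n - A.card - 1 := by omega
      rw [h4]
      omega
    have hμA' : (n - (insert j Ab).card) * (n + 1) +
        ((insert j Ab) \ Kset n (insert j Ab).card).card < N := by
      rw [hcardA', hsdA', Finset.card_erase_of_mem hi]
      have h2 : 1 ≤ (A \ Kset n A.card).card := Finset.card_pos.2 ⟨i, hi⟩
      omega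
    have h1 : f (insert j A) = ∑ m ∈ Finset.range n, lam f z m * T z m (insert j A)ᶜ := by
      rcases Nat.eq_zero_or_pos N with rfl | hN
      · omega
      · exact ih (N - 1) (by omega) _ (by omega) ⟨j, Finset.mem_insert_self _ _⟩
    have h2 : f (insert j Ab) = ∑ m ∈ Finset.range n, lam f z m * T z m (insert j Ab)ᶜ := by
      rcases Nat.eq_zero_or_pos N with rfl | hN
      · omega
      · exact ih (N - 1) (by omega) _ (by omega) ⟨j, Finset.mem_insert_self _ _⟩
    -- combine
    apply mul_left_cancel₀ hzi
    have : z i * f A = (z i - z j) * f (insert j A) + z j * f (insert j Ab) := by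
      linarith [hcross]
    rw [this, h1, h2, Finset.mul_sum, Finset.mul_sum, Finset.mul_sum, ← Finset.sum_add_distrib]
    refine Finset.sum_congr rfl fun m _ => ?_
    have hkey := key_T_identity z hij hiA hjA m
    rw [← hAb] at hkey
    linear_combination (-(lam f z m)) * hkey

end StructMain
section Split
open Finset
variable {n : ℕ}

lemma split_unique {key : Fin n → ℕ} {A B A' B' : Finset (Fin n)}
    (h : A ∪ B = A' ∪ B') (hA : A.card = A'.card)
    (hd : ∀ a ∈ A, ∀ b ∈ B, key a < key b) (hd' : ∀ a ∈ A', ∀ b ∈ B', key a < key b) :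
    A = A' := by
  by_contra hne
  have h1 : (A \ A').Nonempty := by
    rw [Finset.sdiff_nonempty]
    intro hc
    exact hne (Finset.eq_of_subset_of_card_le hc hA.ge)
  have h2 : (A' \ A).Nonempty := by
    rw [Finset.sdiff_nonempty]
    intro hc
    exact hne (Finset.eq_of_subset_of_card_le hc hA.le).symm
  obtain ⟨x, hx⟩ := h1
  obtain ⟨y, hy⟩ := h2
  have hxA : x ∈ A := (Finset.mem_sdiff.1 hx).1
  have hxB' : x ∈ B' := by
    have : x ∈ A' ∪ B' := h ▸ Finset.mem_union_left _ hxA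
    rcases Finset.mem_union.1 this with h' | h'
    · exact absurd h' (Finset.mem_sdiff.1 hx).2
    · exact h'
  have hyA' : y ∈ A' := (Finset.mem_sdiff.1 hy).1
  have hyB : y ∈ B := by
    have : y ∈ A ∪ B := h ▸ Finset.mem_union_left _ hyA'
    rcases Finset.mem_union.1 this with h' | h'
    · exact absurd h' (Finset.mem_sdiff.1 hy).2
    · exact h'
  exact lt_irrefl _ (lt_trans (hd x hxA y hyB) (hd' y hyA' x hxB'))

lemma exists_split {key : Fin n → ℕ} (hinj : Function.Injective key)
    (D : Finset (Fin n)) (k m : ℕ) (hD : D.card = k + m) :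
    ∃ A B : Finset (Fin n), A ∪ B = D ∧ Disjoint A B ∧ A.card = k ∧ B.card = m ∧
      ∀ a ∈ A, ∀ b ∈ B, key a < key b := by
  classical
  let r : Fin n → Fin n → Prop := fun x y => key x ≤ key y
  haveI : DecidableRel r := fun x y => Nat.decLe _ _
  haveI : IsTrans (Fin n) r := ⟨fun a b c hab hbc => le_trans hab hbc⟩
  haveI : IsAntisymm (Fin n) r := ⟨fun a b hab hba => hinj (le_antisymm hab hba)⟩
  haveI : IsTotal (Fin n) r := ⟨fun a b => le_total _ _⟩
  set l := D.sort r with hl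
  have hlen : l.length = k + m := by rw [hl, Finset.length_sort, hD]
  have hnd : l.Nodup := Finset.sort_nodup D r
  have hsrt : l.Pairwise r := Finset.pairwise_sort D r
  have htd : l.take k ++ l.drop k = l := List.take_append_drop k l
  have hndapp : (l.take k ++ l.drop k).Nodup := by rw [htd]; exact hnd
  have hdisjl : List.Disjoint (l.take k) (l.drop k) := fun a ha hb => (List.nodup_append.1 hndapp).2.2 a ha a hb rfl
  have hpw : ∀ a ∈ l.take k, ∀ b ∈ l.drop k, r a b := by
    have hsrt' : (l.take k ++ l.drop k).Pairwise r := by rw [htd]; exact hsrt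
    intro a ha b hb
    exact (List.pairwise_append.1 hsrt').2.2 a ha b hb
  refine ⟨(l.take k).toFinset, (l.drop k).toFinset, ?_, ?_, ?_, ?_, ?_⟩
  · rw [← List.toFinset_append, htd, hl, Finset.sort_toFinset]
  · rw [Finset.disjoint_left]
    intro a ha hb
    exact hdisjl (List.mem_toFinset.1 ha) (List.mem_toFinset.1 hb)
  · rw [List.toFinset_card_of_nodup ((List.nodup_append.1 hndapp).1), List.length_take]
    omega
  · rw [List.toFinset_card_of_nodup ((List.nodup_append.1 hndapp).2.1), List.length_drop]
    omega
  · intro a ha b hb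
    have hr := hpw a (List.mem_toFinset.1 ha) b (List.mem_toFinset.1 hb)
    have hne : a ≠ b := fun hc => hdisjl (List.mem_toFinset.1 ha) (hc ▸ List.mem_toFinset.1 hb)
    exact lt_of_le_of_ne hr (fun hc => hne (hinj hc))

end Split

section IdentityI
open Finset
variable {n : ℕ} (z : Fin n → ℝ)

lemma T_as_filter (m : ℕ) (C : Finset (Fin n)) :
    T z m C = ∑ B ∈ (Finset.powersetCard m Finset.univ).filter (fun B => B ⊆ C),
      ∏ i ∈ B, z i := by
  unfold T
  apply Finset.sum_congr _ (fun _ _ => rfl)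
  ext B
  simp [Finset.mem_powersetCard, and_comm]

lemma identity_I (σ : Equiv.Perm (Fin n)) (k m : ℕ) (hk : 1 ≤ k) :
    ∑ A ∈ Finset.powersetCard k Finset.univ,
      (∏ i ∈ A, z i) * T z m (stopSet σ A)ᶜ = T z (k + m) Finset.univ := by
  classical
  set key : Fin n → ℕ := fun x => ((σ.symm x : Fin n) : ℕ) with hkey
  have hinj : Function.Injective key := by
    intro a b hab
    exact σ.symm.injective (Fin.ext hab)
  have hstep : ∀ A ∈ Finset.powersetCard k Finset.univ,
      (∏ i ∈ A, z i) * T z m (stopSet σ A)ᶜ =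
      ∑ B ∈ (Finset.powersetCard m Finset.univ).filter
          (fun B => ∀ b ∈ B, A.sup key < key b), (∏ i ∈ A, z i) * ∏ i ∈ B, z i := by
    intro A _
    rw [T_as_filter, Finset.mul_sum]
    congr 1
    apply Finset.filter_congr
    intro B _
    constructor
    · intro h b hb
      have := h hb
      rw [Finset.mem_compl, mem_stopSet_iff] at this
      exact not_le.1 this
    · intro h b hb
      rw [Finset.mem_compl, mem_stopSet_iff]
      exact not_le.2 (h b hb)
  rw [Finset.sum_congr rfl hstep, Finset.sum_sigma']
  show _ = ∑ B ∈ Finset.powersetCard (k + m) Finset.univ, ∏ i ∈ B, z i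
  refine Finset.sum_bij (fun x _ => x.1 ∪ x.2) ?_ ?_ ?_ ?_
  · rintro ⟨A, B⟩ hx
    rw [Finset.mem_sigma] at hx
    obtain ⟨hA, hB⟩ := hx
    rw [Finset.mem_filter] at hB
    rw [Finset.mem_powersetCard] at hA
    rw [Finset.mem_powersetCard] at hB
    have hord : ∀ a ∈ A, ∀ b ∈ B, key a < key b := fun a ha b hb =>
      lt_of_le_of_lt (Finset.le_sup ha) (hB.2 b hb)
    have hdisj : Disjoint A B := by
      rw [Finset.disjoint_left]
      intro a ha hb
      exact lt_irrefl _ (hord a ha a hb)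
    rw [Finset.mem_powersetCard]
    refine ⟨Finset.subset_univ _, ?_⟩
    rw [Finset.card_union_of_disjoint hdisj, hA.2, hB.1.2]
  · rintro ⟨A, B⟩ hx ⟨A', B'⟩ hx' heq
    rw [Finset.mem_sigma, Finset.mem_filter, Finset.mem_powersetCard,
      Finset.mem_powersetCard] at hx hx'
    have hord : ∀ a ∈ A, ∀ b ∈ B, key a < key b := fun a ha b hb =>
      lt_of_le_of_lt (Finset.le_sup ha) (hx.2.2 b hb)
    have hord' : ∀ a ∈ A', ∀ b ∈ B', key a < key b := fun a ha b hb =>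
      lt_of_le_of_lt (Finset.le_sup ha) (hx'.2.2 b hb)
    have hAA : A = A' := split_unique heq (by rw [hx.1.2, hx'.1.2]) hord hord'
    subst hAA
    have hdisj : Disjoint A B := by
      rw [Finset.disjoint_left]; intro a ha hb; exact lt_irrefl _ (hord a ha a hb)
    have hdisj' : Disjoint A B' := by
      rw [Finset.disjoint_left]; intro a ha hb; exact lt_irrefl _ (hord' a ha a hb)
    have heq' : A ∪ B = A ∪ B' := heq
    have hBB : B = B' := by
      rw [← Finset.union_sdiff_cancel_left hdisj, ← Finset.union_sdiff_cancel_left hdisj', heq']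
    subst hBB
    rfl
  · intro D hD
    rw [Finset.mem_powersetCard] at hD
    obtain ⟨A, B, hun, hdisj, hcA, hcB, hord⟩ := exists_split hinj D k m hD.2
    have hAne : A.Nonempty := Finset.card_pos.1 (by omega)
    refine ⟨⟨A, B⟩, ?_, hun⟩
    rw [Finset.mem_sigma, Finset.mem_filter, Finset.mem_powersetCard, Finset.mem_powersetCard]
    refine ⟨⟨Finset.subset_univ _, hcA⟩, ⟨Finset.subset_univ _, hcB⟩, ?_⟩
    intro b hb
    rw [Finset.sup_lt_iff]
    · exact fun a ha => hord a ha b hb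
    · obtain ⟨a, ha⟩ := hAne
      exact lt_of_le_of_lt (Nat.zero_le _) (hord a ha b hb)
  · rintro ⟨A, B⟩ hx
    rw [Finset.mem_sigma, Finset.mem_filter, Finset.mem_powersetCard,
      Finset.mem_powersetCard] at hx
    have hord : ∀ a ∈ A, ∀ b ∈ B, key a < key b := fun a ha b hb =>
      lt_of_le_of_lt (Finset.le_sup ha) (hx.2.2 b hb)
    have hdisj : Disjoint A B := by
      rw [Finset.disjoint_left]; intro a ha hb; exact lt_irrefl _ (hord a ha a hb)
    exact (Finset.prod_union hdisj).symm

end IdentityI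
section Kap
open Finset
variable {n : ℕ}

lemma posSet_card (V : Finset (Fin n)) {r : ℕ} (hV : V.card = r) (σ : Equiv.Perm (Fin n)) :
    (V.image (fun x => σ.symm x)).card = r := by
  rw [Finset.card_image_of_injective _ (Equiv.injective _), hV]

/-- the `s`-th element of `V` in order of appearance in the search `σ` -/
noncomputable def kap (V : Finset (Fin n)) {r : ℕ} (hV : V.card = r)
    (σ : Equiv.Perm (Fin n)) (s : Fin r) : {x // x ∈ V} :=
  ⟨σ ((V.image (fun x => σ.symm x)).orderEmbOfFin (posSet_card V hV σ) s), by
    obtain ⟨v, hv, he⟩ := Finset.mem_image.1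
      (Finset.orderEmbOfFin_mem _ (posSet_card V hV σ) s)
    rw [← he, Equiv.apply_symm_apply]
    exact hv⟩

lemma kap_pos (V : Finset (Fin n)) {r : ℕ} (hV : V.card = r) (σ : Equiv.Perm (Fin n))
    (s : Fin r) :
    σ.symm ((kap V hV σ s) : Fin n) =
      (V.image (fun x => σ.symm x)).orderEmbOfFin (posSet_card V hV σ) s := by
  simp [kap]

lemma kap_pos_lt (V : Finset (Fin n)) {r : ℕ} (hV : V.card = r) (σ : Equiv.Perm (Fin n))
    {s t : Fin r} (hst : s < t) :
    ((σ.symm ((kap V hV σ s) : Fin n)) : ℕ) < ((σ.symm ((kap V hV σ t) : Fin n)) : ℕ) := by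
  rw [kap_pos, kap_pos]
  exact (Finset.orderEmbOfFin _ (posSet_card V hV σ)).strictMono hst

lemma kap_injective (V : Finset (Fin n)) {r : ℕ} (hV : V.card = r) (σ : Equiv.Perm (Fin n)) :
    Function.Injective (kap V hV σ) := by
  intro s t hst
  have := congrArg (fun v : {x // x ∈ V} => σ.symm (v : Fin n)) hst
  simp only [kap_pos] at this
  exact (Finset.orderEmbOfFin _ (posSet_card V hV σ)).injective this

lemma kap_bijective (V : Finset (Fin n)) {r : ℕ} (hV : V.card = r) (σ : Equiv.Perm (Fin n)) :
    Function.Bijective (kap V hV σ) := by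
  rw [Fintype.bijective_iff_injective_and_card]
  exact ⟨kap_injective V hV σ, by simp [Fintype.card_coe, hV]⟩

lemma image_symm_eq (V : Finset (Fin n)) (e : Equiv.Perm {x // x ∈ V}) :
    V.image (fun x => (Equiv.Perm.ofSubtype e).symm x) = V := by
  classical
  apply Finset.eq_of_subset_of_card_le
  · intro v hv
    rw [Finset.mem_image] at hv
    obtain ⟨w, hw, rfl⟩ := hv
    by_contra hc
    have := Equiv.Perm.ofSubtype_apply_of_not_mem (p := fun x => x ∈ V) e (a := (Equiv.Perm.ofSubtype e).symm w) hc
    rw [Equiv.apply_symm_apply] at this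
    exact hc (this ▸ hw)
  · rw [Finset.card_image_of_injective _ (Equiv.injective _)]

lemma kap_translate (V : Finset (Fin n)) {r : ℕ} (hV : V.card = r)
    (e : Equiv.Perm {x // x ∈ V}) (σ : Equiv.Perm (Fin n)) (s : Fin r) :
    kap V hV ((Equiv.Perm.ofSubtype e) * σ) s = e (kap V hV σ s) := by
  classical
  set g : Equiv.Perm (Fin n) := Equiv.Perm.ofSubtype e with hg
  have hsymm : ∀ x, (g * σ).symm x = σ.symm (g.symm x) := fun x => rfl
  have hpos : V.image (fun x => (g * σ).symm x) = V.image (fun x => σ.symm x) := by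
    have h1 : V.image (fun x => (g * σ).symm x) =
        (V.image (fun x => g.symm x)).image (fun x => σ.symm x) := by
      rw [Finset.image_image]
      rfl
    rw [h1, hg, image_symm_eq]
  have hemb : ∀ t : Fin r, (V.image (fun x => (g*σ).symm x)).orderEmbOfFin
      (posSet_card V hV (g*σ)) t =
      (V.image (fun x => σ.symm x)).orderEmbOfFin (posSet_card V hV σ) t := by
    intro t
    have := Finset.orderEmbOfFin_unique' (s := V.image (fun x => σ.symm x))
      (posSet_card V hV σ) (f := (V.image (fun x => (g*σ).symm x)).orderEmbOfFin
        (posSet_card V hV (g*σ)))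
      (fun x => by rw [← hpos]; exact Finset.orderEmbOfFin_mem _ _ _)
    rw [← this]
  apply Subtype.ext
  show (g * σ) _ = _
  rw [hemb]
  have hmem : σ ((V.image (fun x => σ.symm x)).orderEmbOfFin (posSet_card V hV σ) s) ∈ V :=
    (kap V hV σ s).2
  calc (g * σ) ((V.image (fun x => σ.symm x)).orderEmbOfFin (posSet_card V hV σ) s)
      = g (σ ((V.image (fun x => σ.symm x)).orderEmbOfFin (posSet_card V hV σ) s)) := rfl
    _ = _ := by
        rw [hg, Equiv.Perm.ofSubtype_apply_of_mem e hmem]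
        rfl

end Kap
section EventIff
open Finset
variable {n : ℕ}

lemma initseg {r p : ℕ} {S : Finset (Fin r)} (hcard : S.card = p)
    (hlt : ∀ s ∈ S, ∀ t, t ∉ S → s < t) : ∀ s : Fin r, s ∈ S ↔ (s : ℕ) < p := by
  intro s
  constructor
  · intro hs
    have hsub : Finset.Iic s ⊆ S := by
      intro t ht
      by_contra htc
      exact absurd (Finset.mem_Iic.1 ht) (not_le.2 (hlt s hs t htc))
    have := Finset.card_le_card hsub
    rw [Fin.card_Iic, hcard] at this
    omega
  · intro hs
    by_contra hsc
    have hsub : S ⊆ Finset.Iio s := fun t ht => Finset.mem_Iio.2 (hlt t ht s hsc)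
    have := Finset.card_le_card hsub
    rw [Fin.card_Iio, hcard] at this
    omega

lemma event_iff {P Q V : Finset (Fin n)} (hV : V = P ∪ Q) (hPQ : Disjoint P Q)
    {r : ℕ} (hVr : V.card = r) (hp : P.card + Q.card = r) (σ : Equiv.Perm (Fin n)) :
    (∀ a ∈ P, ∀ b ∈ Q, ((σ.symm a : Fin n) : ℕ) < ((σ.symm b : Fin n) : ℕ)) ↔
      (∀ s : Fin r, ((kap V hVr σ s : Fin n) ∈ P ↔ (s : ℕ) < P.card)) := by
  constructor
  · intro hE
    have hlt : ∀ s ∈ (Finset.univ.filter (fun s : Fin r => ((kap V hVr σ s : Fin n) ∈ P))),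
        ∀ t, t ∉ (Finset.univ.filter (fun s : Fin r => ((kap V hVr σ s : Fin n) ∈ P))) →
        s < t := by
      intro s hs t ht
      rw [Finset.mem_filter] at hs
      have htQ : (kap V hVr σ t : Fin n) ∈ Q := by
        have hmem : (kap V hVr σ t : Fin n) ∈ P ∪ Q := by
          rw [← hV]; exact (kap V hVr σ t).2
        rcases Finset.mem_union.1 hmem with h | h
        · exact absurd (Finset.mem_filter.2 ⟨Finset.mem_univ t, h⟩) ht
        · exact h
      have hposlt := hE _ hs.2 _ htQ
      by_contra hc
      rcases lt_or_eq_of_le (not_lt.1 hc) with h | h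
      · exact absurd (kap_pos_lt V hVr σ h) (by omega)
      · rw [h] at hposlt; omega
    have hcard : (Finset.univ.filter (fun s : Fin r => ((kap V hVr σ s : Fin n) ∈ P))).card
        = P.card := by
      apply Finset.card_bij (fun s _ => (kap V hVr σ s : Fin n))
      · intro s hs; exact (Finset.mem_filter.1 hs).2
      · intro s hs t ht hst
        exact kap_injective V hVr σ (Subtype.ext hst)
      · intro b hb
        obtain ⟨s, hs⟩ := (kap_bijective V hVr σ).2 ⟨b, by rw [hV]; exact Finset.mem_union_left _ hb⟩
        exact ⟨s, Finset.mem_filter.2 ⟨Finset.mem_univ _, by rw [hs]; exact hb⟩, by rw [hs]⟩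
    intro s
    have := initseg hcard hlt s
    rw [Finset.mem_filter] at this
    simpa using this
  · intro hgood a ha b hb
    obtain ⟨s, hs⟩ := (kap_bijective V hVr σ).2 ⟨a, by rw [hV]; exact Finset.mem_union_left _ ha⟩
    obtain ⟨t, ht⟩ := (kap_bijective V hVr σ).2 ⟨b, by rw [hV]; exact Finset.mem_union_right _ hb⟩
    have hsP : (s : ℕ) < P.card := (hgood s).1 (by rw [hs]; exact ha)
    have htP : ¬ ((t : ℕ) < P.card) := by
      intro hc
      have := (hgood t).2 hc
      rw [ht] at this
      exact Finset.disjoint_left.1 hPQ this hb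
    have hst : s < t := by omega
    have := kap_pos_lt V hVr σ hst
    rw [hs, ht] at this
    exact this

end EventIff
section Fibers
open Finset
variable {n : ℕ}

lemma sw_mul_ofSubtype {k : ℕ} {A V : Finset (Fin n)} (hAV : ∀ x ∈ A, x ∉ V)
    (e : Equiv.Perm {x // x ∈ V}) {σ : Equiv.Perm (Fin n)} (hσ : σ ∈ startsWith k A) :
    (Equiv.Perm.ofSubtype e) * σ ∈ startsWith k A := by
  classical
  rw [mem_startsWith] at hσ ⊢
  have himg : (Finset.univ.filter (fun t : Fin n => (t : ℕ) < k)).image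
      (fun x => (Equiv.Perm.ofSubtype e) (σ x)) =
      ((Finset.univ.filter (fun t : Fin n => (t : ℕ) < k)).image σ).image
        (Equiv.Perm.ofSubtype e) := by
    rw [Finset.image_image]
    rfl
  calc (Finset.univ.filter (fun t : Fin n => (t : ℕ) < k)).image ((Equiv.Perm.ofSubtype e) * σ)
      = ((Finset.univ.filter (fun t : Fin n => (t : ℕ) < k)).image σ).image
          (Equiv.Perm.ofSubtype e) := himg
    _ = A.image (Equiv.Perm.ofSubtype e) := by rw [hσ]
    _ = A.image id := Finset.image_congr (fun x hx =>
          Equiv.Perm.ofSubtype_apply_of_not_mem e (hAV x hx))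
    _ = A := Finset.image_id

lemma fiber_translate {k r : ℕ} {A V : Finset (Fin n)} (hAV : ∀ x ∈ A, x ∉ V)
    (hVr : V.card = r) (g₁ g₂ : Fin r ↪ {x // x ∈ V}) :
    ((startsWith k A).filter (fun σ => ∀ s, kap V hVr σ s = g₁ s)).card =
    ((startsWith k A).filter (fun σ => ∀ s, kap V hVr σ s = g₂ s)).card := by
  classical
  have hbij : ∀ (g : Fin r ↪ {x // x ∈ V}), Function.Bijective g :=
    fun g => (Fintype.bijective_iff_injective_and_card g).2
      ⟨g.injective, by simp [Fintype.card_coe, hVr]⟩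
  set e : Equiv.Perm {x // x ∈ V} :=
    (Equiv.ofBijective g₁ (hbij g₁)).symm.trans (Equiv.ofBijective g₂ (hbij g₂)) with he
  have hee : ∀ s, e (g₁ s) = g₂ s := by
    intro s
    rw [he]
    simp only [Equiv.trans_apply]
    rw [show (g₁ s) = (Equiv.ofBijective g₁ (hbij g₁)) s from rfl, Equiv.symm_apply_apply]
    rfl
  have heeinv : ∀ s, e.symm (g₂ s) = g₁ s := fun s => by
    rw [← hee s, Equiv.symm_apply_apply]
  have hmulmem : ∀ (e' : Equiv.Perm {x // x ∈ V}) (σ : Equiv.Perm (Fin n)),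
      σ ∈ startsWith k A → (Equiv.Perm.ofSubtype e') * σ ∈ startsWith k A :=
    fun e' σ h => sw_mul_ofSubtype hAV e' h
  apply Finset.card_bij' (fun σ _ => (Equiv.Perm.ofSubtype e) * σ)
    (fun σ _ => (Equiv.Perm.ofSubtype e.symm) * σ)
  · intro σ hσ
    rw [Finset.mem_filter] at hσ ⊢
    refine ⟨hmulmem e σ hσ.1, ?_⟩
    intro s
    rw [kap_translate, hσ.2 s, hee s]
  · intro σ hσ
    rw [Finset.mem_filter] at hσ ⊢
    refine ⟨hmulmem e.symm σ hσ.1, ?_⟩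
    intro s
    rw [kap_translate, hσ.2 s, heeinv s]
  · intro σ hσ
    rw [← mul_assoc, ← map_mul]
    have : e.symm * e = 1 := by
      ext v
      simp [Equiv.Perm.mul_apply]
    rw [this, map_one, one_mul]
  · intro σ hσ
    rw [← mul_assoc, ← map_mul]
    have : e * e.symm = 1 := by
      ext v
      simp [Equiv.Perm.mul_apply]
    rw [this, map_one, one_mul]

end Fibers
section GoodCount
open Finset
variable {n : ℕ}

lemma good_count {P Q V : Finset (Fin n)} (hV : V = P ∪ Q) (hPQ : Disjoint P Q)
    {p q r : ℕ} (hp : P.card = p) (hq : Q.card = q) (hr : p + q = r) :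
    ((Finset.univ : Finset (Fin r ↪ {x // x ∈ V})).filter
        (fun g => ∀ s : Fin r, ((g s : Fin n) ∈ P ↔ (s : ℕ) < p))).card =
      p.factorial * q.factorial := by
  classical
  have memPV : ∀ x ∈ P, x ∈ V := fun x hx => by rw [hV]; exact Finset.mem_union_left _ hx
  have memQV : ∀ x ∈ Q, x ∈ V := fun x hx => by rw [hV]; exact Finset.mem_union_right _ hx
  have memVPQ : ∀ x ∈ V, x ∉ P → x ∈ Q := by
    intro x hx hxP
    rw [hV] at hx
    rcases Finset.mem_union.1 hx with h | h
    · exact absurd h hxP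
    · exact h
  have hcast : ∀ s : Fin p, (((finCongr hr) (Fin.castAdd q s) : Fin r) : ℕ) = (s : ℕ) := by
    intro s; simp
  have hnat : ∀ t : Fin q, (((finCongr hr) (Fin.natAdd p t) : Fin r) : ℕ) = p + (t : ℕ) := by
    intro t; simp
  have hcard : ((Finset.univ : Finset ((Fin p ↪ {x // x ∈ P}) × (Fin q ↪ {x // x ∈ Q})))).card
      = p.factorial * q.factorial := by
    rw [Finset.card_univ, Fintype.card_prod, Fintype.card_embedding_eq,
      Fintype.card_embedding_eq, Fintype.card_coe, Fintype.card_coe, Fintype.card_fin,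
      Fintype.card_fin, hp, hq, Nat.descFactorial_self, Nat.descFactorial_self]
  rw [← hcard]
  -- forward map components
  have iP : ∀ (g : Fin r ↪ {x // x ∈ V}), g ∈ (Finset.univ.filter
      (fun g : Fin r ↪ {x // x ∈ V} => ∀ s : Fin r, ((g s : Fin n) ∈ P ↔ (s : ℕ) < p))) →
      ∀ s : Fin p, (g ((finCongr hr) (Fin.castAdd q s)) : Fin n) ∈ P := by
    intro g hg s
    exact ((Finset.mem_filter.1 hg).2 _).2 (by rw [hcast]; exact s.2)
  have iQ : ∀ (g : Fin r ↪ {x // x ∈ V}), g ∈ (Finset.univ.filter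
      (fun g : Fin r ↪ {x // x ∈ V} => ∀ s : Fin r, ((g s : Fin n) ∈ P ↔ (s : ℕ) < p))) →
      ∀ t : Fin q, (g ((finCongr hr) (Fin.natAdd p t)) : Fin n) ∈ Q := by
    intro g hg t
    refine memVPQ _ (g _).2 ?_
    intro hc
    have := ((Finset.mem_filter.1 hg).2 _).1 hc
    rw [hnat] at this
    omega
  apply Finset.card_bij'
    (i := fun g hg =>
      (⟨fun s : Fin p => ⟨(g ((finCongr hr) (Fin.castAdd q s)) : Fin n), iP g hg s⟩, by
        rw [Function.Injective]
        intro a b hab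
        have h1 := congrArg Subtype.val hab
        dsimp only at h1
        have h2 := (EmbeddingLike.apply_eq_iff_eq g).1 (Subtype.ext h1)
        have h3 := congrArg (fun x : Fin r => (x : ℕ)) h2
        rw [hcast, hcast] at h3
        exact Fin.ext h3⟩,
      ⟨fun t : Fin q => ⟨(g ((finCongr hr) (Fin.natAdd p t)) : Fin n), iQ g hg t⟩, by
        rw [Function.Injective]
        intro a b hab
        have h1 := congrArg Subtype.val hab
        dsimp only at h1
        have h2 := (EmbeddingLike.apply_eq_iff_eq g).1 (Subtype.ext h1)
        have h3 := congrArg (fun x : Fin r => (x : ℕ)) h2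
        rw [hnat, hnat] at h3
        exact Fin.ext (by omega)⟩))
    (j := fun gg _ =>
      ⟨fun s : Fin r => if h : (s : ℕ) < p then
          (⟨(gg.1 ⟨(s : ℕ), h⟩ : Fin n), memPV _ (gg.1 ⟨(s : ℕ), h⟩).2⟩ : {x // x ∈ V})
        else ⟨(gg.2 ⟨(s : ℕ) - p, by have := s.2; omega⟩ : Fin n),
          memQV _ (gg.2 ⟨(s : ℕ) - p, by have := s.2; omega⟩).2⟩, by
        rw [Function.Injective]
        intro a b hab
        by_cases ha : (a : ℕ) < p <;> by_cases hb : (b : ℕ) < p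
        · rw [dif_pos ha, dif_pos hb] at hab
          have h1 := congrArg Subtype.val hab
          dsimp only at h1
          have h2 := (EmbeddingLike.apply_eq_iff_eq gg.1).1 (Subtype.ext h1)
          have h3 := congrArg (fun x : Fin p => (x : ℕ)) h2
          exact Fin.ext h3
        · rw [dif_pos ha, dif_neg hb] at hab
          have h1 := congrArg Subtype.val hab
          dsimp only at h1
          exact absurd ((h1 ▸ (gg.1 ⟨(a : ℕ), ha⟩).2) : ((gg.2 _ : Fin n) ∈ P))
            (Finset.disjoint_left.1 hPQ.symm (gg.2 _).2)
        · rw [dif_neg ha, dif_pos hb] at hab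
          have h1 := congrArg Subtype.val hab
          dsimp only at h1
          exact absurd ((h1.symm ▸ (gg.1 ⟨(b : ℕ), hb⟩).2) : ((gg.2 _ : Fin n) ∈ P))
            (Finset.disjoint_left.1 hPQ.symm (gg.2 _).2)
        · rw [dif_neg ha, dif_neg hb] at hab
          have h1 := congrArg Subtype.val hab
          dsimp only at h1
          have h2 := (EmbeddingLike.apply_eq_iff_eq gg.2).1 (Subtype.ext h1)
          have h3 := congrArg (fun x : Fin q => (x : ℕ)) h2
          dsimp only at h3
          have har : (a : ℕ) < r := a.2
          have hbr : (b : ℕ) < r := b.2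
          exact Fin.ext (by omega)⟩)
    ?_ ?_ ?_ ?_
  · intro g hg
    exact Finset.mem_univ _
  · intro gg hgg
    rw [Finset.mem_filter]
    refine ⟨Finset.mem_univ _, ?_⟩
    intro s
    dsimp only [Function.Embedding.coeFn_mk]
    by_cases h : (s : ℕ) < p
    · rw [dif_pos h]
      exact ⟨fun _ => h, fun _ => (gg.1 _).2⟩
    · rw [dif_neg h]
      exact ⟨fun hc => absurd hc (Finset.disjoint_left.1 hPQ.symm (gg.2 _).2),
        fun hc => absurd hc h⟩
  · intro g hg
    apply Function.Embedding.ext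
    intro s
    apply Subtype.ext
    dsimp only [Function.Embedding.coeFn_mk]
    by_cases h : (s : ℕ) < p
    · rw [dif_pos h]
      dsimp only
      have hkey : (finCongr hr) (Fin.castAdd q (⟨(s : ℕ), h⟩ : Fin p)) = s :=
        Fin.ext (by rw [hcast])
      rw [hkey]
    · rw [dif_neg h]
      dsimp only
      have hkey : ∀ hh : (s : ℕ) - p < q,
          (finCongr hr) (Fin.natAdd p (⟨(s : ℕ) - p, hh⟩ : Fin q)) = s := by
        intro hh
        apply Fin.ext
        rw [hnat]
        dsimp only
        have := s.2
        omega
      rw [hkey]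
  · intro gg hgg
    refine Prod.ext ?_ ?_
    · apply Function.Embedding.ext
      intro s
      apply Subtype.ext
      dsimp only [Function.Embedding.coeFn_mk]
      have h : ((((finCongr hr) (Fin.castAdd q s)) : Fin r) : ℕ) < p := by
        rw [hcast]; exact s.2
      rw [dif_pos h]
      dsimp only
      have hkey : (⟨(((finCongr hr) (Fin.castAdd q s) : Fin r) : ℕ), h⟩ : Fin p) = s :=
        Fin.ext (by dsimp only; rw [hcast])
      rw [hkey]
    · apply Function.Embedding.ext
      intro t
      apply Subtype.ext
      dsimp only [Function.Embedding.coeFn_mk]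
      have h : ¬ ((((finCongr hr) (Fin.natAdd p t)) : Fin r) : ℕ) < p := by
        rw [hnat]; omega
      rw [dif_neg h]
      dsimp only
      have hkey : ∀ hh, (⟨(((finCongr hr) (Fin.natAdd p t) : Fin r) : ℕ) - p, hh⟩ : Fin q) = t := by
        intro hh
        apply Fin.ext
        dsimp only
        rw [hnat]
        omega
      rw [hkey]

end GoodCount
section CountCore
open Finset
variable {n : ℕ}

lemma count_core {k : ℕ} {A P Q : Finset (Fin n)} (hPQ : Disjoint P Q)
    (hPA : Disjoint P A) (hQA : Disjoint Q A) :
    ((startsWith k A).filter (fun σ : Equiv.Perm (Fin n) =>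
        ∀ a ∈ P, ∀ b ∈ Q, ((σ.symm a : Fin n) : ℕ) < ((σ.symm b : Fin n) : ℕ))).card *
      (P.card + Q.card).factorial =
    (startsWith k A).card * (P.card.factorial * Q.card.factorial) := by
  classical
  set V : Finset (Fin n) := P ∪ Q with hV
  set p := P.card with hp
  set q := Q.card with hq
  set r := p + q with hr
  have hVr : V.card = r := Finset.card_union_of_disjoint hPQ
  have hAV : ∀ x ∈ A, x ∉ V := by
    intro x hxA hxV
    rcases Finset.mem_union.1 hxV with h | h
    · exact Finset.disjoint_left.1 hPA h hxA
    · exact Finset.disjoint_left.1 hQA h hxA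
  set khat : Equiv.Perm (Fin n) → (Fin r ↪ {x // x ∈ V}) :=
    fun σ => ⟨kap V hVr σ, kap_injective V hVr σ⟩ with hkhat
  have hkhat_iff : ∀ (σ : Equiv.Perm (Fin n)) (g : Fin r ↪ {x // x ∈ V}),
      khat σ = g ↔ ∀ s, kap V hVr σ s = g s := by
    intro σ g
    constructor
    · intro h s; rw [← h]; rfl
    · intro h
      apply Function.Embedding.ext
      intro s
      exact h s
  have hfibtrans : ∀ g₁ g₂ : Fin r ↪ {x // x ∈ V},
      ((startsWith k A).filter (fun σ => khat σ = g₁)).card =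
      ((startsWith k A).filter (fun σ => khat σ = g₂)).card := by
    intro g₁ g₂
    have hfilter : ∀ g : Fin r ↪ {x // x ∈ V},
        (startsWith k A).filter (fun σ => khat σ = g) =
        (startsWith k A).filter (fun σ => ∀ s, kap V hVr σ s = g s) :=
      fun g => Finset.filter_congr (fun σ _ => hkhat_iff σ g)
    rw [hfilter g₁, hfilter g₂]
    exact fiber_translate hAV hVr g₁ g₂
  set g₀ : Fin r ↪ {x // x ∈ V} := ((finCongr hVr.symm).trans V.equivFin.symm).toEmbedding
  set c := ((startsWith k A).filter (fun σ => khat σ = g₀)).card with hc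
  have hall : (startsWith k A).card = r.factorial * c := by
    rw [Finset.card_eq_sum_card_fiberwise (f := khat)
      (t := (Finset.univ : Finset (Fin r ↪ {x // x ∈ V}))) (fun σ _ => Finset.mem_univ _)]
    rw [Finset.sum_congr rfl (fun g _ => hfibtrans g g₀)]
    rw [Finset.sum_const, smul_eq_mul]
    congr 1
    rw [Finset.card_univ, Fintype.card_embedding_eq, Fintype.card_coe, Fintype.card_fin, hVr,
      Nat.descFactorial_self]
  have hgood_iff : ∀ σ : Equiv.Perm (Fin n),
      (∀ a ∈ P, ∀ b ∈ Q, ((σ.symm a : Fin n) : ℕ) < ((σ.symm b : Fin n) : ℕ)) ↔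
      (∀ s : Fin r, (((khat σ) s : Fin n) ∈ P ↔ (s : ℕ) < p)) :=
    fun σ => event_iff hV hPQ hVr hr.symm σ
  have hE : ((startsWith k A).filter (fun σ : Equiv.Perm (Fin n) =>
      ∀ a ∈ P, ∀ b ∈ Q, ((σ.symm a : Fin n) : ℕ) < ((σ.symm b : Fin n) : ℕ))).card =
      (p.factorial * q.factorial) * c := by
    rw [Finset.card_eq_sum_card_fiberwise (f := khat)
      (t := (Finset.univ.filter (fun g : Fin r ↪ {x // x ∈ V} =>
        ∀ s : Fin r, ((g s : Fin n) ∈ P ↔ (s : ℕ) < p))))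
      (fun σ hσ => Finset.mem_filter.2 ⟨Finset.mem_univ _,
        (hgood_iff σ).1 (Finset.mem_filter.1 hσ).2⟩)]
    have hfib_eq : ∀ g ∈ (Finset.univ.filter (fun g : Fin r ↪ {x // x ∈ V} =>
        ∀ s : Fin r, ((g s : Fin n) ∈ P ↔ (s : ℕ) < p))),
        (((startsWith k A).filter (fun σ : Equiv.Perm (Fin n) =>
          ∀ a ∈ P, ∀ b ∈ Q, ((σ.symm a : Fin n) : ℕ) < ((σ.symm b : Fin n) : ℕ))).filter
            (fun σ => khat σ = g)).card = c := by
      intro g hg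
      have heq : ((startsWith k A).filter (fun σ : Equiv.Perm (Fin n) =>
          ∀ a ∈ P, ∀ b ∈ Q, ((σ.symm a : Fin n) : ℕ) < ((σ.symm b : Fin n) : ℕ))).filter
            (fun σ => khat σ = g) = (startsWith k A).filter (fun σ => khat σ = g) := by
        rw [Finset.filter_filter]
        apply Finset.filter_congr
        intro σ _
        constructor
        · rintro ⟨_, h2⟩; exact h2
        · intro h2
          refine ⟨?_, h2⟩
          rw [hgood_iff σ]
          intro s
          rw [h2]
          exact (Finset.mem_filter.1 hg).2 s
      rw [heq]
      exact hfibtrans g g₀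
    rw [Finset.sum_congr rfl hfib_eq, Finset.sum_const, smul_eq_mul]
    congr 1
    exact good_count hV hPQ hp.symm hq.symm hr.symm
  rw [hE, hall]
  ring
end CountCore
section PerA
open Finset
variable {n : ℕ} (z : Fin n → ℝ)

lemma pos_injective (σ : Equiv.Perm (Fin n)) :
    Function.Injective (fun x : Fin n => ((σ.symm x : Fin n) : ℕ)) := by
  intro a b hab
  exact σ.symm.injective (Fin.ext hab)

lemma sup_pos_ge {σ : Equiv.Perm (Fin n)} {H : Finset (Fin n)} :
    H.card ≤ H.sup (fun h => ((σ.symm h : Fin n) : ℕ)) + 1 := by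
  classical
  have himg : (H.image (fun x : Fin n => ((σ.symm x : Fin n) : ℕ))) ⊆
      Finset.range (H.sup (fun h => ((σ.symm h : Fin n) : ℕ)) + 1) := by
    intro t ht
    obtain ⟨h, hh, rfl⟩ := Finset.mem_image.1 ht
    rw [Finset.mem_range]
    exact Nat.lt_succ_of_le (Finset.le_sup (f := fun h : Fin n => ((σ.symm h : Fin n) : ℕ)) hh)
  calc H.card = (H.image (fun x : Fin n => ((σ.symm x : Fin n) : ℕ))).card :=
        (Finset.card_image_of_injective _ (pos_injective σ)).symm
    _ ≤ _ := le_trans (Finset.card_le_card himg) (by rw [Finset.card_range])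

lemma per_A {k : ℕ} (hk : 1 ≤ k) {A H : Finset (Fin n)} (hA : A.card = k)
    (hH : H.card = k) (m : ℕ) :
    ∑ σ ∈ startsWith k A, T z m ((stopSet σ H)ᶜ) =
      ((startsWith k A).card : ℝ) *
        (((H \ A).card.factorial * m.factorial : ℕ) : ℝ) /
          ((((H \ A).card + m).factorial : ℕ) : ℝ) * T z m ((A ∪ H)ᶜ) := by
  classical
  set pos : Equiv.Perm (Fin n) → Fin n → ℕ := fun σ x => ((σ.symm x : Fin n) : ℕ) with hpos
  -- step 1: expand T and swap sums
  have step1 : ∑ σ ∈ startsWith k A, T z m ((stopSet σ H)ᶜ) =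
      ∑ B ∈ Finset.powersetCard m Finset.univ,
        (((startsWith k A).filter (fun σ => B ⊆ (stopSet σ H)ᶜ)).card : ℝ) *
          ∏ i ∈ B, z i := by
    rw [Finset.sum_congr rfl (fun σ _ => T_as_filter z m ((stopSet σ H)ᶜ))]
    rw [Finset.sum_congr rfl (fun σ _ => Finset.sum_filter _ _)]
    rw [Finset.sum_comm]
    refine Finset.sum_congr rfl fun B _ => ?_
    rw [← Finset.sum_filter, Finset.sum_const, nsmul_eq_mul]
  rw [step1]
  -- per-B analysis
  have hcond : ∀ B ∈ Finset.powersetCard m Finset.univ, B ⊆ (A ∪ H)ᶜ →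
      ∀ σ ∈ startsWith k A,
      (B ⊆ (stopSet σ H)ᶜ ↔ ∀ a ∈ H \ A, ∀ b ∈ B, pos σ a < pos σ b) := by
    intro B hB hBc σ hσ
    constructor
    · intro h a ha b hb
      have hbc := h hb
      rw [Finset.mem_compl, mem_stopSet_iff] at hbc
      exact lt_of_le_of_lt (Finset.le_sup (f := pos σ) (Finset.mem_sdiff.1 ha).1) (not_le.1 hbc)
    · intro h b hb
      rw [Finset.mem_compl, mem_stopSet_iff]
      rw [not_le]
      have hbA : b ∉ A := by
        have := hBc hb
        rw [Finset.mem_compl] at this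
        exact fun hc => this (Finset.mem_union_left _ hc)
      have hbk : k ≤ pos σ b := by
        by_contra hc
        exact hbA ((startsWith_mem_iff hσ).2 (not_le.1 hc))
      rw [Finset.sup_lt_iff (lt_of_lt_of_le (lt_of_lt_of_le Nat.zero_lt_one hk) hbk)]
      intro h' hh'
      by_cases hh'A : h' ∈ A
      · exact lt_of_lt_of_le ((startsWith_mem_iff hσ).1 hh'A) hbk
      · exact h h' (Finset.mem_sdiff.2 ⟨hh', hh'A⟩) b hb
  have hbad : ∀ B ∈ Finset.powersetCard m Finset.univ, ¬ (B ⊆ (A ∪ H)ᶜ) →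
      (((startsWith k A).filter (fun σ => B ⊆ (stopSet σ H)ᶜ)).card : ℝ) = 0 := by
    intro B hB hBc
    rw [Nat.cast_eq_zero, Finset.card_eq_zero]
    rw [Finset.filter_eq_empty_iff]
    intro σ hσ hsub
    apply hBc
    obtain ⟨b, hb, hbAH⟩ : ∃ b ∈ B, b ∈ A ∪ H := by
      by_contra hc
      push_neg at hc
      exact hBc (fun b hb => Finset.mem_compl.2 (hc b hb))
    have hbc := hsub hb
    rw [Finset.mem_compl, mem_stopSet_iff, not_le] at hbc
    rcases Finset.mem_union.1 hbAH with hbA | hbH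
    · -- b ∈ A : pos < k ≤ sup+1, but sup ≥ k-1
      have h1 : ((σ.symm b : Fin n) : ℕ) < k := (startsWith_mem_iff hσ).1 hbA
      have h2 := sup_pos_ge (σ := σ) (H := H)
      rw [hH] at h2
      omega
    · exact absurd (Finset.le_sup (f := pos σ) hbH) (not_le.2 hbc)
  -- restrict to good B's
  rw [show ∑ B ∈ Finset.powersetCard m Finset.univ,
      (((startsWith k A).filter (fun σ => B ⊆ (stopSet σ H)ᶜ)).card : ℝ) * ∏ i ∈ B, z i =
      ∑ B ∈ (Finset.powersetCard m Finset.univ).filter (fun B => B ⊆ (A ∪ H)ᶜ),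
      (((startsWith k A).filter (fun σ => B ⊆ (stopSet σ H)ᶜ)).card : ℝ) * ∏ i ∈ B, z i from
    (Finset.sum_filter_of_ne (fun B hB hne => by
      by_contra hc
      exact hne (by rw [hbad B hB hc, zero_mul]))).symm]
  -- per good B compute the count
  have hgoodcount : ∀ B ∈ (Finset.powersetCard m Finset.univ).filter (fun B => B ⊆ (A ∪ H)ᶜ),
      (((startsWith k A).filter (fun σ => B ⊆ (stopSet σ H)ᶜ)).card : ℝ) =
      ((startsWith k A).card : ℝ) * (((H \ A).card.factorial * m.factorial : ℕ) : ℝ) /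
        ((((H \ A).card + m).factorial : ℕ) : ℝ) := by
    intro B hB
    rw [Finset.mem_filter, Finset.mem_powersetCard] at hB
    obtain ⟨⟨_, hBm⟩, hBc⟩ := hB
    have hPQ : Disjoint (H \ A) B := by
      rw [Finset.disjoint_left]
      intro x hx hxB
      exact Finset.mem_compl.1 (hBc hxB) (Finset.mem_union_right _ (Finset.mem_sdiff.1 hx).1)
    have hPA : Disjoint (H \ A) A := Finset.sdiff_disjoint
    have hQA : Disjoint B A := by
      rw [Finset.disjoint_left]
      intro x hx hxA
      exact Finset.mem_compl.1 (hBc hx) (Finset.mem_union_left _ hxA)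
    have hcore := count_core (k := k) hPQ hPA hQA
    rw [hBm] at hcore
    have hfilt : (startsWith k A).filter (fun σ => B ⊆ (stopSet σ H)ᶜ) =
        (startsWith k A).filter (fun σ : Equiv.Perm (Fin n) =>
          ∀ a ∈ H \ A, ∀ b ∈ B, ((σ.symm a : Fin n) : ℕ) < ((σ.symm b : Fin n) : ℕ)) := by
      apply Finset.filter_congr
      intro σ hσ
      exact hcond B (Finset.mem_powersetCard.2 ⟨Finset.subset_univ _, hBm⟩) hBc σ hσ
    rw [hfilt]
    rw [eq_div_iff (by positivity)]
    have := congrArg (fun x : ℕ => (x : ℝ)) hcore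
    push_cast at this ⊢
    linarith [this]
  rw [Finset.sum_congr rfl (fun B hB => by rw [hgoodcount B hB])]
  rw [← Finset.mul_sum, ← T_as_filter]
end PerA
section IdentityIII
open Finset
variable {n : ℕ} (z : Fin n → ℝ)

lemma count_containing (D X : Finset (Fin n)) (hXD : X ⊆ D) {k : ℕ} (hXk : X.card ≤ k) :
    ((Finset.powersetCard k D).filter (fun A => X ⊆ A)).card =
      (D.card - X.card).choose (k - X.card) := by
  classical
  rw [← Finset.card_sdiff_of_subset hXD, ← Finset.card_powersetCard (k - X.card) (D \ X)]
  apply Finset.card_bij (fun A _ => A \ X)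
  · intro A hA
    rw [Finset.mem_filter, Finset.mem_powersetCard] at hA
    rw [Finset.mem_powersetCard]
    refine ⟨Finset.sdiff_subset_sdiff hA.1.1 Finset.Subset.rfl, ?_⟩
    rw [Finset.card_sdiff_of_subset hA.2, hA.1.2]
  · intro A hA A' hA' heq
    rw [Finset.mem_filter] at hA hA'
    calc A = (A \ X) ∪ X := (Finset.sdiff_union_of_subset hA.2).symm
      _ = (A' \ X) ∪ X := by rw [heq]
      _ = A' := Finset.sdiff_union_of_subset hA'.2
  · intro B hB
    rw [Finset.mem_powersetCard] at hB
    have hdisj : Disjoint B X := by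
      rw [Finset.disjoint_left]
      intro x hx hx2
      exact (Finset.mem_sdiff.1 (hB.1 hx)).2 hx2
    refine ⟨B ∪ X, ?_, ?_⟩
    · rw [Finset.mem_filter, Finset.mem_powersetCard]
      refine ⟨⟨Finset.union_subset (le_trans hB.1 Finset.sdiff_subset) hXD, ?_⟩,
        Finset.subset_union_right⟩
      rw [Finset.card_union_of_disjoint hdisj, hB.2]
      omega
    · rw [Finset.union_sdiff_right]
      exact Finset.sdiff_eq_self_of_disjoint hdisj

lemma identity_III {k : ℕ} (hk : 1 ≤ k) (m : ℕ) {H : Finset (Fin n)} (hH : H.card = k) :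
    ∑ A ∈ Finset.powersetCard k Finset.univ,
      (∏ i ∈ A, z i) * ((((H \ A).card.factorial * m.factorial : ℕ) : ℝ) /
        ((((H \ A).card + m).factorial : ℕ) : ℝ)) * T z m ((A ∪ H)ᶜ) =
      T z (k + m) Finset.univ := by
  classical
  -- expand T and pass to a sigma sum
  have hexp : ∀ A ∈ Finset.powersetCard k Finset.univ,
      (∏ i ∈ A, z i) * ((((H \ A).card.factorial * m.factorial : ℕ) : ℝ) /
        ((((H \ A).card + m).factorial : ℕ) : ℝ)) * T z m ((A ∪ H)ᶜ) =
      ∑ B ∈ (Finset.powersetCard m Finset.univ).filter (fun B => B ⊆ (A ∪ H)ᶜ),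
        (∏ i ∈ A, z i) * ((((H \ A).card.factorial * m.factorial : ℕ) : ℝ) /
          ((((H \ A).card + m).factorial : ℕ) : ℝ)) * ∏ i ∈ B, z i := by
    intro A _
    rw [T_as_filter, Finset.mul_sum]
  rw [Finset.sum_congr rfl hexp, Finset.sum_sigma']
  -- reorganize along D = A ∪ B
  rw [show (∑ x ∈ (Finset.powersetCard k Finset.univ).sigma
      (fun A => (Finset.powersetCard m Finset.univ).filter (fun B => B ⊆ (A ∪ H)ᶜ)),
      (∏ i ∈ x.1, z i) * ((((H \ x.1).card.factorial * m.factorial : ℕ) : ℝ) /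
        ((((H \ x.1).card + m).factorial : ℕ) : ℝ)) * ∏ i ∈ x.2, z i) =
      ∑ y ∈ (Finset.powersetCard (k + m) Finset.univ).sigma
        (fun D => (Finset.powersetCard k D).filter (fun A => H ∩ D ⊆ A)),
      (∏ i ∈ y.1, z i) * ((((H \ y.2).card.factorial * m.factorial : ℕ) : ℝ) /
        ((((H \ y.2).card + m).factorial : ℕ) : ℝ)) from ?_]
  · -- inner sum is 1
    rw [Finset.sum_sigma]
    rw [show T z (k+m) Finset.univ =
      ∑ D ∈ Finset.powersetCard (k+m) Finset.univ, ∏ i ∈ D, z i from rfl]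
    refine Finset.sum_congr rfl fun D hD => ?_
    rw [Finset.mem_powersetCard] at hD
    have hak : (H ∩ D).card ≤ k := by
      rw [← hH]
      exact Finset.card_le_card Finset.inter_subset_left
    have hconst : ∀ A ∈ (Finset.powersetCard k D).filter (fun A => H ∩ D ⊆ A),
        (∏ i ∈ D, z i) * ((((H \ A).card.factorial * m.factorial : ℕ) : ℝ) /
          ((((H \ A).card + m).factorial : ℕ) : ℝ)) =
        (∏ i ∈ D, z i) * ((((k - (H ∩ D).card).factorial * m.factorial : ℕ) : ℝ) /
          ((((k - (H ∩ D).card) + m).factorial : ℕ) : ℝ)) := by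
      intro A hA
      rw [Finset.mem_filter, Finset.mem_powersetCard] at hA
      have hHA : H ∩ A = H ∩ D := by
        apply Finset.Subset.antisymm
        · exact Finset.inter_subset_inter Finset.Subset.rfl hA.1.1
        · intro x hx
          exact Finset.mem_inter.2 ⟨(Finset.mem_inter.1 hx).1, hA.2 hx⟩
      have hcard : (H \ A).card = k - (H ∩ D).card := by
        have := Finset.card_sdiff_add_card_inter H A
        rw [hHA, hH] at this
        omega
      rw [hcard]
    rw [Finset.sum_congr rfl hconst, Finset.sum_const, nsmul_eq_mul]
    rw [count_containing D (H ∩ D) Finset.inter_subset_right hak]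
    rw [hD.2]
    have hchoose := Nat.choose_mul_factorial_mul_factorial
      (n := k + m - (H ∩ D).card) (k := k - (H ∩ D).card) (by omega)
    have hrw : k + m - (H ∩ D).card - (k - (H ∩ D).card) = m := by omega
    rw [hrw] at hchoose
    have hne : ((((k - (H ∩ D).card) + m).factorial : ℕ) : ℝ) ≠ 0 := by positivity
    have h2 : k + m - (H ∩ D).card = (k - (H ∩ D).card) + m := by omega
    rw [h2]
    have hchoose' : ((k - (H ∩ D).card) + m).choose (k - (H ∩ D).card) *
        ((k - (H ∩ D).card).factorial * m.factorial) =
        ((k - (H ∩ D).card) + m).factorial := by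
      rw [← mul_assoc]
      rw [h2] at hchoose
      exact hchoose
    have hcast : ((((k - (H ∩ D).card) + m).choose (k - (H ∩ D).card) : ℕ) : ℝ) *
        (((k - (H ∩ D).card).factorial : ℕ) : ℝ) * ((m.factorial : ℕ) : ℝ) =
        ((((k - (H ∩ D).card) + m).factorial : ℕ) : ℝ) := by
      rw [mul_assoc]
      exact_mod_cast congrArg (Nat.cast : ℕ → ℝ) hchoose'
    push_cast
    field_simp
    linear_combination (∏ i ∈ D, z i) * hcast
  · -- the sigma reindexing
    apply Finset.sum_nbij' (i := fun x => (⟨x.1 ∪ x.2, x.1⟩ :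
        (_ : Finset (Fin n)) × Finset (Fin n)))
      (j := fun y => (⟨y.2, y.1 \ y.2⟩ : (_ : Finset (Fin n)) × Finset (Fin n)))
    · rintro ⟨A, B⟩ hx
      rw [Finset.mem_sigma, Finset.mem_filter, Finset.mem_powersetCard,
        Finset.mem_powersetCard] at hx
      obtain ⟨⟨_, hAk⟩, ⟨_, hBm⟩, hBc⟩ := hx
      have hdisj : Disjoint A B := by
        rw [Finset.disjoint_right]
        intro b hb
        exact fun hc => Finset.mem_compl.1 (hBc hb) (Finset.mem_union_left _ hc)
      rw [Finset.mem_sigma, Finset.mem_filter, Finset.mem_powersetCard,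
        Finset.mem_powersetCard]
      refine ⟨⟨Finset.subset_univ _, by rw [Finset.card_union_of_disjoint hdisj, hAk, hBm]⟩,
        ⟨Finset.subset_union_left, hAk⟩, ?_⟩
      intro x hx
      rcases Finset.mem_union.1 (Finset.mem_inter.1 hx).2 with h | h
      · exact h
      · exact absurd (Finset.mem_compl.1 (hBc h))
          (by simp [Finset.mem_union, (Finset.mem_inter.1 hx).1])
    · rintro ⟨D, A⟩ hy
      rw [Finset.mem_sigma, Finset.mem_filter, Finset.mem_powersetCard,
        Finset.mem_powersetCard] at hy
      obtain ⟨⟨_, hDk⟩, ⟨hAD, hAk⟩, hHD⟩ := hy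
      rw [Finset.mem_sigma, Finset.mem_filter, Finset.mem_powersetCard,
        Finset.mem_powersetCard]
      refine ⟨⟨Finset.subset_univ _, hAk⟩, ⟨Finset.subset_univ _, ?_⟩, ?_⟩
      · rw [Finset.card_sdiff_of_subset hAD, hDk, hAk]
        omega
      · intro b hb
        rw [Finset.mem_compl, Finset.mem_union]
        rintro (hc | hc)
        · exact (Finset.mem_sdiff.1 hb).2 hc
        · exact (Finset.mem_sdiff.1 hb).2
            (hHD (Finset.mem_inter.2 ⟨hc, (Finset.mem_sdiff.1 hb).1⟩))
    · rintro ⟨A, B⟩ hx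
      rw [Finset.mem_sigma, Finset.mem_filter, Finset.mem_powersetCard,
        Finset.mem_powersetCard] at hx
      obtain ⟨⟨_, hAk⟩, ⟨_, hBm⟩, hBc⟩ := hx
      have hdisj : Disjoint A B := by
        rw [Finset.disjoint_right]
        intro b hb
        exact fun hc => Finset.mem_compl.1 (hBc hb) (Finset.mem_union_left _ hc)
      have : (A ∪ B) \ A = B := by
        rw [Finset.union_sdiff_left]
        exact Finset.sdiff_eq_self_of_disjoint hdisj.symm
      simp only [this]
    · rintro ⟨D, A⟩ hy
      rw [Finset.mem_sigma, Finset.mem_filter, Finset.mem_powersetCard,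
        Finset.mem_powersetCard] at hy
      obtain ⟨⟨_, hDk⟩, ⟨hAD, hAk⟩, hHD⟩ := hy
      have : A ∪ D \ A = D := Finset.union_sdiff_of_subset hAD
      simp only [this]
    · rintro ⟨A, B⟩ hx
      rw [Finset.mem_sigma, Finset.mem_filter, Finset.mem_powersetCard,
        Finset.mem_powersetCard] at hx
      obtain ⟨⟨_, hAk⟩, ⟨_, hBm⟩, hBc⟩ := hx
      have hdisj : Disjoint A B := by
        rw [Finset.disjoint_right]
        intro b hb
        exact fun hc => Finset.mem_compl.1 (hBc hb) (Finset.mem_union_left _ hc)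
      show _ = (∏ i ∈ A ∪ B, z i) * _
      rw [Finset.prod_union hdisj]
      ring

end IdentityIII
section Glue
open Finset
variable {n : ℕ}

lemma stopSet_nonempty (hn : 1 ≤ n) (σ : Equiv.Perm (Fin n)) (H : Finset (Fin n)) :
    (stopSet σ H).Nonempty := by
  refine ⟨σ ⟨0, hn⟩, ?_⟩
  rw [mem_stopSet_iff]
  simp

lemma startsWith_nonempty {k : ℕ} (hkn : k ≤ n) {A : Finset (Fin n)} (hA : A.card = k) :
    (startsWith k A).Nonempty := by
  classical
  have hAc : Aᶜ.card = n - k := by rw [Finset.card_compl, hA, Fintype.card_fin]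
  have h1 : k + (n - k) = n := by omega
  set e : Equiv.Perm (Fin n) :=
    ((finCongr h1.symm).trans (finSumFinEquiv.symm)).trans
      ((Equiv.sumCongr ((A.equivFin.trans (finCongr hA)).symm)
          ((Aᶜ.equivFin.trans (finCongr hAc)).symm)).trans
        ((Equiv.sumCongr (Equiv.refl _)
            (Equiv.subtypeEquivRight (fun x => (Finset.mem_compl (a := x))))).trans
          (Equiv.sumCompl (fun x : Fin n => x ∈ A)))) with he
  refine ⟨e, ?_⟩
  rw [mem_startsWith]
  have hmem : ∀ t : Fin n, (t : ℕ) < k → e t ∈ A := by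
    intro t ht
    have hcast : (finCongr h1.symm) t = Fin.castAdd (n - k) ⟨(t : ℕ), ht⟩ := by
      apply Fin.ext
      simp
    rw [he]
    simp only [Equiv.trans_apply, hcast, finSumFinEquiv_symm_apply_castAdd]
    simp only [Equiv.sumCongr_apply, Sum.map_inl, Equiv.refl_apply]
    exact ((A.equivFin.trans (finCongr hA)).symm ⟨(t : ℕ), ht⟩).2
  have hmem2 : ∀ t : Fin n, ¬ ((t : ℕ) < k) → e t ∉ A := by
    intro t ht
    have hcast : (finCongr h1.symm) t = Fin.natAdd k ⟨(t : ℕ) - k, by omega⟩ := by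
      apply Fin.ext
      simp
      omega
    rw [he]
    simp only [Equiv.trans_apply, hcast, finSumFinEquiv_symm_apply_natAdd]
    simp only [Equiv.sumCongr_apply, Sum.map_inr]
    have hy := ((Aᶜ.equivFin.trans (finCongr hAc)).symm ⟨(t : ℕ) - k, by omega⟩).2
    rw [Finset.mem_compl] at hy
    simpa using hy
  apply Finset.eq_of_subset_of_card_le
  · intro x hx
    rw [Finset.mem_image] at hx
    obtain ⟨t, ht, rfl⟩ := hx
    rw [Finset.mem_filter] at ht
    exact hmem t ht.2
  · rw [Finset.card_image_of_injective _ (Equiv.injective _),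
      show (Finset.univ.filter (fun t : Fin n => (t : ℕ) < k)) = Kset n k from rfl,
      card_Kset hkn, hA]

end Glue
theorem searcher_strategy_guarantees_value
    {n k : ℕ} (hk1 : 1 ≤ k) (hk2 : k ≤ n - 1)
    (f : Finset (Fin n) → ℝ) (z : Fin n → ℝ) (hf : ZIndexable f z)
    (H : Finset (Fin n)) (hH : H.card = k) (σ₀ : Equiv.Perm (Fin n)) :
    ∑ A ∈ Finset.powersetCard k (Finset.univ : Finset (Fin n)),
        ((∏ i ∈ A, z i) / T z k Finset.univ) * payoff f σ₀ A ≤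
      ∑ A ∈ Finset.powersetCard k (Finset.univ : Finset (Fin n)),
        ((∏ i ∈ A, z i) / T z k Finset.univ) * sPay f k A H := by
  classical
  have hn : 1 ≤ n := by omega
  have hkn : k ≤ n := by omega
  have hstruct := struct_thm f z hf
  apply le_of_eq
  have hlhs : ∑ A ∈ Finset.powersetCard k (Finset.univ : Finset (Fin n)),
      ((∏ i ∈ A, z i) / T z k Finset.univ) * payoff f σ₀ A =
      ∑ m ∈ Finset.range n, lam f z m * (T z (k + m) Finset.univ / T z k Finset.univ) := by
    have step : ∀ A ∈ Finset.powersetCard k (Finset.univ : Finset (Fin n)),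
        ((∏ i ∈ A, z i) / T z k Finset.univ) * payoff f σ₀ A =
        ∑ m ∈ Finset.range n,
          lam f z m * (((∏ i ∈ A, z i) * T z m ((stopSet σ₀ A)ᶜ)) / T z k Finset.univ) := by
      intro A _
      show ((∏ i ∈ A, z i) / T z k Finset.univ) * f (stopSet σ₀ A) = _
      rw [hstruct (stopSet σ₀ A) (stopSet_nonempty hn σ₀ A), Finset.mul_sum]
      refine Finset.sum_congr rfl fun m _ => ?_
      ring
    rw [Finset.sum_congr rfl step, Finset.sum_comm]
    refine Finset.sum_congr rfl fun m _ => ?_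
    rw [← Finset.mul_sum, ← Finset.sum_div, identity_I z σ₀ k m hk1]
  have hrhs : ∑ A ∈ Finset.powersetCard k (Finset.univ : Finset (Fin n)),
      ((∏ i ∈ A, z i) / T z k Finset.univ) * sPay f k A H =
      ∑ m ∈ Finset.range n, lam f z m * (T z (k + m) Finset.univ / T z k Finset.univ) := by
    have hsPay : ∀ A ∈ Finset.powersetCard k (Finset.univ : Finset (Fin n)),
        sPay f k A H = ∑ m ∈ Finset.range n,
          lam f z m * (((((H \ A).card.factorial * m.factorial : ℕ) : ℝ) /
            ((((H \ A).card + m).factorial : ℕ) : ℝ)) * T z m ((A ∪ H)ᶜ)) := by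
      intro A hA
      rw [Finset.mem_powersetCard] at hA
      have hsw := startsWith_nonempty hkn hA.2
      have hcne : ((startsWith k A).card : ℝ) ≠ 0 :=
        Nat.cast_ne_zero.2 (Finset.card_pos.2 hsw).ne'
      have hexp : ∑ σ ∈ startsWith k A, payoff f σ H =
          ∑ m ∈ Finset.range n, lam f z m *
            (((startsWith k A).card : ℝ) *
              ((((H \ A).card.factorial * m.factorial : ℕ) : ℝ)) /
                ((((H \ A).card + m).factorial : ℕ) : ℝ) * T z m ((A ∪ H)ᶜ)) := by
        have step2 : ∀ σ ∈ startsWith k A, payoff f σ H =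
            ∑ m ∈ Finset.range n, lam f z m * T z m ((stopSet σ H)ᶜ) := by
          intro σ _
          show f (stopSet σ H) = _
          exact hstruct (stopSet σ H) (stopSet_nonempty hn σ H)
        rw [Finset.sum_congr rfl step2, Finset.sum_comm]
        refine Finset.sum_congr rfl fun m _ => ?_
        rw [← Finset.mul_sum, per_A z hk1 hA.2 hH m]
      show (∑ σ ∈ startsWith k A, payoff f σ H) / ((startsWith k A).card : ℝ) = _
      rw [hexp, Finset.sum_div]
      refine Finset.sum_congr rfl fun m _ => ?_
      rw [div_eq_iff hcne]
      ring
    rw [Finset.sum_congr rfl (fun A hA => by rw [hsPay A hA])]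
    have step3 : ∀ A ∈ Finset.powersetCard k (Finset.univ : Finset (Fin n)),
        ((∏ i ∈ A, z i) / T z k Finset.univ) * (∑ m ∈ Finset.range n,
          lam f z m * (((((H \ A).card.factorial * m.factorial : ℕ) : ℝ) /
            ((((H \ A).card + m).factorial : ℕ) : ℝ)) * T z m ((A ∪ H)ᶜ))) =
        ∑ m ∈ Finset.range n, lam f z m *
          (((∏ i ∈ A, z i) * ((((H \ A).card.factorial * m.factorial : ℕ) : ℝ) /
            ((((H \ A).card + m).factorial : ℕ) : ℝ)) * T z m ((A ∪ H)ᶜ)) / T z k Finset.univ) := by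
      intro A _
      rw [Finset.mul_sum]
      refine Finset.sum_congr rfl fun m _ => ?_
      ring
    rw [Finset.sum_congr rfl step3, Finset.sum_comm]
    refine Finset.sum_congr rfl fun m _ => ?_
    rw [← Finset.mul_sum, ← Finset.sum_div, identity_III z hk1 m hH]
  rw [hlhs, hrhs]
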